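/- For every integer q ≥ 2 there exist unit vectors μ_1, …, μ_q and ν_1, …, ν_q in ℂ^q such that for all i, j ∈ [q], ⟨μ_i|ν_j⟩ = (q/(2(q−1)))·(1 − δ_{ij}); in particular ⟨μ_i|ν_i⟩ = 0 for every i. -/

import Mathlib

noncomputable section

lemma sum_aux (q : ℕ) (a b a' b' : ℝ) (i j : Fin q) :
    ∑ k : Fin q, (a + if k = i then b else 0) * (a' + if k = j then b' else 0)
      = q * (a * a') + b * a' + a * b' + (if i = j then b * b' else 0) := by
  have h : ∀ k : Fin q,
      (a + if k = i then b else 0) * (a' + if k = j then b' else 0)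
        = a * a' + ((if k = i then b * a' else 0)
            + ((if k = j then a * b' else 0)
              + (if k = i then (if k = j then b * b' else 0) else 0))) := by
    intro k
    split_ifs <;> ring
  rw [Finset.sum_congr rfl (fun k _ => h k)]
  rw [Finset.sum_add_distrib, Finset.sum_add_distrib, Finset.sum_add_distrib]
  simp [Finset.sum_ite_eq', Finset.card_univ, mul_comm]
  split_ifs <;> ring

/-- for every `q ≥ 2` there are unit vectors `μ_1, …, μ_q` and
`ν_1, …, ν_q` in `ℂ^q` with `⟨μ_i|ν_j⟩ = (q/(2(q−1)))·(1 − δ_{ij})`;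
in particular `⟨μ_i|ν_i⟩ = 0`. -/
theorem exists_mu_nu (q : ℕ) (hq : 2 ≤ q) :
    ∃ μ ν : Fin q → EuclideanSpace ℂ (Fin q),
      (∀ i, ‖μ i‖ = 1) ∧ (∀ i, ‖ν i‖ = 1) ∧
      ∀ i j, (inner ℂ (μ i) (ν j) : ℂ) =
        ((q : ℂ) / (2 * ((q : ℂ) - 1))) * (if i = j then 0 else 1) := by
  have hq2 : (2 : ℝ) ≤ (q : ℝ) := by exact_mod_cast hq
  have hq0 : (q : ℝ) ≠ 0 := by linarith
  have hq1 : (0 : ℝ) < (q : ℝ) - 1 := by linarith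
  have hq1' : (q : ℝ) - 1 ≠ 0 := ne_of_gt hq1
  set c : ℝ := (q : ℝ) / (2 * ((q : ℝ) - 1)) with hc
  have hcpos : 0 < c := by
    apply div_pos (by linarith); linarith
  set s : ℝ := Real.sqrt c with hsdef
  set D : ℝ := Real.sqrt ((q : ℝ) / 2) with hDdef
  have hs2 : s ^ 2 = c := Real.sq_sqrt hcpos.le
  have hD2 : D ^ 2 = (q : ℝ) / 2 := Real.sq_sqrt (by positivity)
  have key3 : 2 * ((q : ℝ) - 1) * s ^ 2 = (q : ℝ) := by
    rw [hs2, hc]; field_simp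
  have key1 : D ^ 2 + s ^ 2 = (q : ℝ) * s ^ 2 := by
    rw [hD2]; nlinarith [key3]
  have key2 : D ^ 2 - s ^ 2 + (q : ℝ) * s ^ 2 = (q : ℝ) := by
    rw [hD2]; nlinarith [key3]
  set a : ℝ := (D - s) / q with ha
  set a' : ℝ := (D + s) / q with ha'
  set μ : Fin q → EuclideanSpace ℂ (Fin q) :=
    fun i => WithLp.toLp 2 (fun k => ((a + if k = i then s else 0 : ℝ) : ℂ)) with hμ
  set ν : Fin q → EuclideanSpace ℂ (Fin q) :=
    fun j => WithLp.toLp 2 (fun k => ((a' + if k = j then -s else 0 : ℝ) : ℂ)) with hν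
  have inner_eq : ∀ (A B A' B' : ℝ) (i j : Fin q),
      (@inner ℂ (EuclideanSpace ℂ (Fin q)) _
             (WithLp.toLp 2 (fun k => ((A + if k = i then B else 0 : ℝ) : ℂ)))
             (WithLp.toLp 2 (fun k => ((A' + if k = j then B' else 0 : ℝ) : ℂ))))
        = ((q * (A * A') + B * A' + A * B' + (if i = j then B * B' else 0) : ℝ) : ℂ) := by
    intro A B A' B' i j
    rw [PiLp.inner_apply]
    simp only [PiLp.toLp_apply, RCLike.inner_apply, Complex.conj_ofReal, ← Complex.ofReal_mul,
      ← Complex.ofReal_sum]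
    congr 1; rw [← sum_aux q A B A' B' i j]; exact Finset.sum_congr rfl (fun k _ => mul_comm _ _)
  have norm_of_inner : ∀ x : EuclideanSpace ℂ (Fin q),
      (inner ℂ x x : ℂ) = 1 → ‖x‖ = 1 := by
    intro x hx
    have h1 := inner_self_eq_norm_sq (𝕜 := ℂ) (x := x)
    rw [hx] at h1
    simp at h1
    nlinarith [norm_nonneg x, h1]
  refine ⟨μ, ν, ?_, ?_, ?_⟩
  · intro i
    apply norm_of_inner
    rw [hμ, inner_eq a s a s i i, if_pos rfl]
    norm_cast
    rw [ha]
    field_simp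
    linear_combination key2
  · intro j
    apply norm_of_inner
    rw [hν, inner_eq a' (-s) a' (-s) j j, if_pos rfl]
    norm_cast
    rw [ha']
    field_simp
    linear_combination key2
  · intro i j
    rw [hμ, hν, inner_eq a s a' (-s) i j]
    have hval : (q : ℝ) * (a * a') + s * a' + a * (-s) + (if i = j then s * (-s) else 0)
        = c * (if i = j then 0 else 1) := by
      by_cases h : i = j
      · rw [if_pos h, if_pos h, mul_zero, ha, ha']
        field_simp
        linear_combination key1
      · rw [if_neg h, if_neg h, mul_one, add_zero, ha, ha', hc]
        field_simp
        linear_combination (2 * (q : ℝ) - 2) * key1 + (q : ℝ) * key3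
    rw [hval, hc]
    push_cast
    by_cases h : i = j <;> simp [h]
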